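/- Suppose Λ = F is a finite-dimensional real inner product space with dist(a,b) = ‖a − b‖, Θ is a compact topological space with a finite Borel measure ν, ι : Θ → E and γ : Θ → F are continuous, and λ : Θ → [0,∞) is continuous with ∫_Θ λ dν = 1, and let g̃_ε(x) = (∫_Θ γ(θ) λ(θ) ψ_ε(x − ι(θ)) dν(θ)) / (∫_Θ λ(θ) ψ_ε(x − ι(θ)) dν(θ)). Then the Bayes estimator is essentially unique: if g : E → F is measurable and R_ε(g;λ) = R_ε(g̃_ε;λ) < ∞, then g(x) = g̃_ε(x) for Lebesgue-almost every x ∈ E. -/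

import Mathlib

open MeasureTheory Real

/-- The gaussian kernel `ψ_ε(u) = exp(−‖u‖²/(2ε²)) / (2πε²)^{s/2}` on a real inner product
space `E` of dimension `s`. -/
noncomputable def gaussKernel (E : Type*) [NormedAddCommGroup E] [InnerProductSpace ℝ E]
    (ε : ℝ) (u : E) : ℝ :=
  Real.exp (-‖u‖ ^ 2 / (2 * ε ^ 2)) / (2 * Real.pi * ε ^ 2) ^ ((Module.finrank ℝ E : ℝ) / 2)

lemma gaussKernel_continuous (E : Type*) [NormedAddCommGroup E] [InnerProductSpace ℝ E]
    (ε : ℝ) : Continuous (gaussKernel E ε) := by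
  unfold gaussKernel
  exact (Real.continuous_exp.comp (by fun_prop)).div_const _

lemma gaussKernel_pos (E : Type*) [NormedAddCommGroup E] [InnerProductSpace ℝ E]
    {ε : ℝ} (hε : 0 < ε) (u : E) : 0 < gaussKernel E ε u := by
  unfold gaussKernel
  have h2 : (0:ℝ) < 2 * Real.pi * ε ^ 2 := by positivity
  exact div_pos (Real.exp_pos _) (Real.rpow_pos_of_pos h2 _)

/-- Essential uniqueness of the Bayes estimator: any measurable estimator `g` whose Bayesian
risk equals the (finite) Bayesian risk of the posterior-mean estimator `g̃_ε` agrees with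
`g̃_ε` Lebesgue-almost everywhere on `E`. -/
theorem bayes_estimator_essentially_unique
    {E : Type*} [NormedAddCommGroup E] [InnerProductSpace ℝ E] [FiniteDimensional ℝ E]
    [MeasurableSpace E] [BorelSpace E]
    {F : Type*} [NormedAddCommGroup F] [InnerProductSpace ℝ F] [FiniteDimensional ℝ F]
    [MeasurableSpace F] [BorelSpace F]
    {Θ : Type*} [TopologicalSpace Θ] [CompactSpace Θ] [MeasurableSpace Θ] [BorelSpace Θ]
    (ν : Measure Θ) [IsFiniteMeasure ν]
    (ι : Θ → E) (hι : Continuous ι)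
    (γ : Θ → F) (hγ : Continuous γ)
    (l : Θ → ℝ) (hl : Continuous l) (hl0 : ∀ θ, 0 ≤ l θ) (hl1 : ∫ θ, l θ ∂ν = 1)
    {ε : ℝ} (hε : 0 < ε)
    (gt : E → F)
    (hgt : ∀ x : E, gt x =
      (∫ θ, l θ * gaussKernel E ε (x - ι θ) ∂ν)⁻¹ •
        ∫ θ, (l θ * gaussKernel E ε (x - ι θ)) • γ θ ∂ν)
    (g : E → F) (hg : Measurable g)
    (heq : ∫⁻ θ, ∫⁻ x, ENNReal.ofReal (‖g x - γ θ‖ ^ 2 * l θ * gaussKernel E ε (x - ι θ))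
              ∂volume ∂ν
            = ∫⁻ θ, ∫⁻ x, ENNReal.ofReal (‖gt x - γ θ‖ ^ 2 * l θ * gaussKernel E ε (x - ι θ))
              ∂volume ∂ν)
    (hfin : ∫⁻ θ, ∫⁻ x, ENNReal.ofReal (‖gt x - γ θ‖ ^ 2 * l θ * gaussKernel E ε (x - ι θ))
              ∂volume ∂ν < ⊤) :
    ∀ᵐ x ∂(volume : Measure E), g x = gt x := by
  -- notation
  set w : E → Θ → ℝ := fun x θ => l θ * gaussKernel E ε (x - ι θ) with hw_def
  have hwcont : Continuous fun p : E × Θ => w p.1 p.2 := by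
    apply Continuous.mul (hl.comp continuous_snd)
    exact (gaussKernel_continuous E ε).comp (continuous_fst.sub (hι.comp continuous_snd))
  have hwcontx : ∀ x, Continuous (w x) :=
    fun x => hwcont.comp (Continuous.prodMk_right x)
  have hw0 : ∀ x θ, 0 ≤ w x θ :=
    fun x θ => mul_nonneg (hl0 θ) (gaussKernel_pos E hε _).le
  have hcint : ∀ (f : Θ → ℝ), Continuous f → Integrable f ν :=
    fun f hf => hf.integrable_of_hasCompactSupport (HasCompactSupport.of_compactSpace f)
  have hcintF : ∀ (f : Θ → F), Continuous f → Integrable f ν :=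
    fun f hf => hf.integrable_of_hasCompactSupport (HasCompactSupport.of_compactSpace f)
  set m : E → ℝ := fun x => ∫ θ, w x θ ∂ν with hm_def
  set M : E → F := fun x => ∫ θ, w x θ • γ θ ∂ν with hM_def
  have hInt_w : ∀ x, Integrable (w x) ν := fun x => hcint _ (hwcontx x)
  have hInt_wγ : ∀ x, Integrable (fun θ => w x θ • γ θ) ν :=
    fun x => hcintF _ ((hwcontx x).smul hγ)
  have hm_pos : ∀ x, 0 < m x := by
    intro x
    rcases lt_or_eq_of_le (integral_nonneg (f := w x) (hw0 x)) with h | h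
    · exact h
    · exfalso
      have h0 : w x =ᵐ[ν] 0 :=
        (integral_eq_zero_iff_of_nonneg (hw0 x) (hInt_w x)).mp h.symm
      have hl00 : l =ᵐ[ν] 0 := by
        filter_upwards [h0] with θ hθ
        have hKpos := gaussKernel_pos E hε (x - ι θ)
        have : l θ * gaussKernel E ε (x - ι θ) = 0 := hθ
        simpa [hKpos.ne'] using mul_eq_zero.mp this
      rw [integral_congr_ae hl00] at hl1
      simp at hl1
  have hmM : ∀ x, m x • gt x = M x := by
    intro x
    rw [hgt x]
    rw [smul_smul, mul_inv_cancel₀ (hm_pos x).ne', one_smul]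
  -- measurability of m, M, gt
  have hm_sm : StronglyMeasurable m :=
    (hwcont.stronglyMeasurable).integral_prod_right'
  have hM_sm : StronglyMeasurable M :=
    (Continuous.stronglyMeasurable (by fun_prop :
      Continuous fun p : E × Θ => w p.1 p.2 • γ p.2)).integral_prod_right'
  have hgt_meas : Measurable gt := by
    have : gt = fun x => (m x)⁻¹ • M x := funext hgt
    rw [this]
    exact (hm_sm.measurable.inv).smul hM_sm.measurable
  -- pointwise decomposition
  have key : ∀ x, ∫ θ, ‖g x - γ θ‖ ^ 2 * w x θ ∂ν
      = ‖g x - gt x‖ ^ 2 * m x + ∫ θ, ‖gt x - γ θ‖ ^ 2 * w x θ ∂ν := by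
    intro x
    have hIa : Integrable (fun θ => ‖g x - gt x‖ ^ 2 * w x θ) ν :=
      (hInt_w x).const_mul _
    have hIc : Integrable (fun θ => ‖gt x - γ θ‖ ^ 2 * w x θ) ν :=
      hcint _ (by fun_prop)
    have hIb : Integrable
        (fun θ => (2 * inner ℝ (g x - gt x) (gt x - γ θ)) * w x θ) ν :=
      hcint _ ((continuous_const.mul
        ((continuous_const (y := g x - gt x)).inner (continuous_const.sub hγ))).mul (hwcontx x))
    have hsplit : ∀ θ, ‖g x - γ θ‖ ^ 2 * w x θ
        = ‖g x - gt x‖ ^ 2 * w x θ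
          + ((2 * inner ℝ (g x - gt x) (gt x - γ θ)) * w x θ
          + ‖gt x - γ θ‖ ^ 2 * w x θ) := by
      intro θ
      have : g x - γ θ = (g x - gt x) + (gt x - γ θ) := by abel
      rw [this, norm_add_sq_real]
      ring
    have hcross : ∫ θ, (2 * inner ℝ (g x - gt x) (gt x - γ θ)) * w x θ ∂ν = 0 := by
      have h1 : ∀ θ, (2 * inner ℝ (g x - gt x) (gt x - γ θ)) * w x θ
          = 2 * inner ℝ (g x - gt x) (w x θ • (gt x - γ θ)) := by
        intro θ
        rw [real_inner_smul_right]; ring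
      simp_rw [h1]
      rw [integral_const_mul]
      have h2 : Integrable (fun θ => w x θ • (gt x - γ θ)) ν :=
        hcintF _ (by fun_prop)
      rw [integral_inner h2]
      have h3 : ∫ θ, w x θ • (gt x - γ θ) ∂ν = m x • gt x - M x := by
        simp_rw [smul_sub]
        rw [integral_sub ((hInt_w x).smul_const _) (hInt_wγ x),
          integral_smul_const]
      rw [h3, hmM x, sub_self, inner_zero_right, mul_zero]
    calc ∫ θ, ‖g x - γ θ‖ ^ 2 * w x θ ∂ν
        = ∫ θ, (‖g x - gt x‖ ^ 2 * w x θ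
          + ((2 * inner ℝ (g x - gt x) (gt x - γ θ)) * w x θ
          + ‖gt x - γ θ‖ ^ 2 * w x θ)) ∂ν := by simp_rw [hsplit]
      _ = ‖g x - gt x‖ ^ 2 * m x + ∫ θ, ‖gt x - γ θ‖ ^ 2 * w x θ ∂ν := by
          have hIbc : Integrable (fun θ => (2 * inner ℝ (g x - gt x) (gt x - γ θ)) * w x θ
              + ‖gt x - γ θ‖ ^ 2 * w x θ) ν := hIb.add hIc
          rw [integral_add hIa hIbc, integral_add hIb hIc, hcross, zero_add,
            integral_const_mul]
  -- ENNReal-valued pieces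
  set f1 : E → ENNReal := fun x => ENNReal.ofReal (‖g x - gt x‖ ^ 2 * m x) with hf1_def
  have hf1_meas : Measurable f1 := by
    apply Measurable.ennreal_ofReal
    exact (((hg.sub hgt_meas).norm.pow_const 2)).mul hm_sm.measurable
  have hswapg : ∫⁻ θ, ∫⁻ x, ENNReal.ofReal (‖g x - γ θ‖ ^ 2 * l θ * gaussKernel E ε (x - ι θ))
        ∂volume ∂ν
      = ∫⁻ x, ∫⁻ θ, ENNReal.ofReal (‖g x - γ θ‖ ^ 2 * l θ * gaussKernel E ε (x - ι θ))
        ∂ν ∂volume := by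
    apply lintegral_lintegral_swap
    apply Measurable.aemeasurable
    apply Measurable.ennreal_ofReal
    exact ((((hg.comp measurable_snd).sub (hγ.measurable.comp measurable_fst)).norm.pow_const
      2).mul (hl.measurable.comp measurable_fst)).mul
      ((gaussKernel_continuous E ε).measurable.comp
        (measurable_snd.sub (hι.measurable.comp measurable_fst)))
  have hswapgt : ∫⁻ θ, ∫⁻ x, ENNReal.ofReal (‖gt x - γ θ‖ ^ 2 * l θ * gaussKernel E ε (x - ι θ))
        ∂volume ∂ν
      = ∫⁻ x, ∫⁻ θ, ENNReal.ofReal (‖gt x - γ θ‖ ^ 2 * l θ * gaussKernel E ε (x - ι θ))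
        ∂ν ∂volume := by
    apply lintegral_lintegral_swap
    apply Measurable.aemeasurable
    apply Measurable.ennreal_ofReal
    exact ((((hgt_meas.comp measurable_snd).sub (hγ.measurable.comp measurable_fst)).norm.pow_const
      2).mul (hl.measurable.comp measurable_fst)).mul
      ((gaussKernel_continuous E ε).measurable.comp
        (measurable_snd.sub (hι.measurable.comp measurable_fst)))
  -- pointwise in x: inner lintegrals as ofReal of Bochner integrals
  have hA : ∀ x, ∫⁻ θ, ENNReal.ofReal (‖g x - γ θ‖ ^ 2 * l θ * gaussKernel E ε (x - ι θ)) ∂ν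
      = f1 x + ∫⁻ θ, ENNReal.ofReal (‖gt x - γ θ‖ ^ 2 * l θ * gaussKernel E ε (x - ι θ)) ∂ν := by
    intro x
    have e1 : ∫⁻ θ, ENNReal.ofReal (‖g x - γ θ‖ ^ 2 * l θ * gaussKernel E ε (x - ι θ)) ∂ν
        = ENNReal.ofReal (∫ θ, ‖g x - γ θ‖ ^ 2 * w x θ ∂ν) := by
      rw [ofReal_integral_eq_lintegral_ofReal (hcint _ (by fun_prop))
        (Filter.Eventually.of_forall fun θ => mul_nonneg (sq_nonneg _) (hw0 x θ))]
      simp_rw [hw_def, mul_assoc]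
    have e2 : ∫⁻ θ, ENNReal.ofReal (‖gt x - γ θ‖ ^ 2 * l θ * gaussKernel E ε (x - ι θ)) ∂ν
        = ENNReal.ofReal (∫ θ, ‖gt x - γ θ‖ ^ 2 * w x θ ∂ν) := by
      rw [ofReal_integral_eq_lintegral_ofReal (hcint _ (by fun_prop))
        (Filter.Eventually.of_forall fun θ => mul_nonneg (sq_nonneg _) (hw0 x θ))]
      simp_rw [hw_def, mul_assoc]
    rw [e1, e2, key x, ENNReal.ofReal_add (mul_nonneg (sq_nonneg _) (hm_pos x).le)
      (integral_nonneg fun θ => mul_nonneg (sq_nonneg _) (hw0 x θ))]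
  have hR_ne : (∫⁻ x, ∫⁻ θ,
      ENNReal.ofReal (‖gt x - γ θ‖ ^ 2 * l θ * gaussKernel E ε (x - ι θ)) ∂ν ∂volume) ≠ ⊤ := by
    rw [← hswapgt]; exact hfin.ne
  have hzero : ∫⁻ x, f1 x ∂volume = 0 := by
    have h1 : ∫⁻ x, f1 x ∂volume + ∫⁻ x, ∫⁻ θ,
        ENNReal.ofReal (‖gt x - γ θ‖ ^ 2 * l θ * gaussKernel E ε (x - ι θ)) ∂ν ∂volume
        = ∫⁻ x, ∫⁻ θ,
        ENNReal.ofReal (‖gt x - γ θ‖ ^ 2 * l θ * gaussKernel E ε (x - ι θ)) ∂ν ∂volume := by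
      rw [← lintegral_add_left hf1_meas]
      simp_rw [← hA]
      rw [← hswapg, ← hswapgt, heq]
    have := congrArg (fun z => z - ∫⁻ x, ∫⁻ θ,
        ENNReal.ofReal (‖gt x - γ θ‖ ^ 2 * l θ * gaussKernel E ε (x - ι θ)) ∂ν ∂volume) h1
    simpa [ENNReal.add_sub_cancel_right hR_ne, tsub_self] using this
  have hf1_zero : ∀ᵐ x ∂(volume : Measure E), f1 x = 0 :=
    (lintegral_eq_zero_iff hf1_meas).mp hzero
  filter_upwards [hf1_zero] with x hx
  rw [hf1_def] at hx
  simp only [ENNReal.ofReal_eq_zero] at hx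
  have hsq : ‖g x - gt x‖ ^ 2 = 0 := by
    nlinarith [hm_pos x, sq_nonneg ‖g x - gt x‖, hx]
  have : g x - gt x = 0 := by simpa using hsq
  exact sub_eq_zero.mp this
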